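/- (Derandomization lemma.) Let θ and Γ be finite sets, μ a probability distribution on Γ, and c > 0. For every n ∈ ℕ, every probability distribution q on θ and every s^n ∈ θ^n, let a function I_{q,s^n} : Γ → [0,c] be given. Assume there is a function f : (0,∞) → (0,∞) with f(δ) → 0 as δ → 0 such that for every γ ∈ Γ, every n, every s^n ∈ θ^n and all probability distributions q, q' on θ with ‖q − q'‖₁ ≤ δ: |I_{q,s^n}(γ) − I_{q',s^n}(γ)| ≤ f(δ). Write μ(I_{q,s^n}) := ∑_{γ∈Γ} μ(γ)·I_{q,s^n}(γ). Then for every ε > 0 there is N such that for all n ≥ N there exist L = n² elements γ₁,…,γ_L ∈ Γ with (1/L)·∑_{l=1}^L I_{q,s^n}(γ_l) ≥ (1−ε)·μ(I_{q,s^n}) − ε simultaneously for every probability distribution q on θ and every s^n ∈ θ^n. -/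

import Mathlib

/- STATEMENT 10: Derandomization lemma: n² realizations of the common randomness suffice,
uniformly over all mixing distributions q on θ and all state sequences s^n. -/

open scoped BigOperators

noncomputable section

/-- A probability distribution on a finite type. -/
def IsProbDist {α : Type*} [Fintype α] (p : α → ℝ) : Prop :=
  (∀ a, 0 ≤ p a) ∧ ∑ a, p a = 1

open Finset Real Filter

-- quadratic upper bound for exp(-u), u ≥ 0
lemma exp_neg_le_quad {u : ℝ} (hu : 0 ≤ u) : Real.exp (-u) ≤ 1 - u + u ^ 2 := by
  have h1 : 1 + u ≤ Real.exp u := by linarith [Real.add_one_le_exp u]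
  have h2 : Real.exp (-u) * Real.exp u = 1 := by
    rw [← Real.exp_add]; simp
  have h3 : (0:ℝ) < Real.exp (-u) := Real.exp_pos _
  nlinarith [mul_le_mul_of_nonneg_left h1 h3.le, sq_nonneg u, sq_nonneg (u - 1)]

lemma chernoff_bound {Γ : Type*} [Fintype Γ] (μ : Γ → ℝ) (hμ0 : ∀ γ, 0 ≤ μ γ)
    (hμ1 : ∑ γ, μ γ = 1) (c : ℝ) (hc : 0 < c) (X : Γ → ℝ)
    (hX : ∀ γ, X γ ∈ Set.Icc (0:ℝ) c) (t e : ℝ) (ht : 0 < t) (L : ℕ) :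
    ∑ v ∈ Finset.univ.filter
        (fun v : Fin L → Γ => ∑ l, X (v l) < (L:ℝ) * ((∑ γ, μ γ * X γ) - e)),
      ∏ l, μ (v l) ≤ Real.exp ((L:ℝ) * (-(t*e) + t^2*c^2)) := by
  classical
  set m := ∑ γ, μ γ * X γ with hm
  have hm0 : 0 ≤ m := Finset.sum_nonneg fun γ _ => mul_nonneg (hμ0 γ) (hX γ).1
  have hmc : m ≤ c := by
    calc m ≤ ∑ γ, μ γ * c :=
        Finset.sum_le_sum fun γ _ => mul_le_mul_of_nonneg_left (hX γ).2 (hμ0 γ)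
    _ = c := by rw [← Finset.sum_mul, hμ1, one_mul]
  set E := ∑ γ, μ γ * Real.exp (-(t * X γ)) with hE
  have hE0 : 0 ≤ E :=
    Finset.sum_nonneg fun γ _ => mul_nonneg (hμ0 γ) (Real.exp_pos _).le
  have hEle : E ≤ Real.exp (-(t*m) + t^2*c^2) := by
    have h1 : E ≤ ∑ γ, μ γ * (1 - t * X γ + (t * X γ)^2) :=
      Finset.sum_le_sum fun γ _ => mul_le_mul_of_nonneg_left
        (exp_neg_le_quad (mul_nonneg ht.le (hX γ).1)) (hμ0 γ)
    have h2 : ∑ γ, μ γ * (1 - t * X γ + (t*X γ)^2)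
        = 1 - t*m + t^2 * ∑ γ, μ γ * (X γ)^2 := by
      have : ∀ γ ∈ Finset.univ, μ γ * (1 - t*X γ + (t*X γ)^2)
          = μ γ - t*(μ γ * X γ) + t^2*(μ γ * (X γ)^2) := fun γ _ => by ring
      rw [Finset.sum_congr rfl this]
      rw [Finset.sum_add_distrib, Finset.sum_sub_distrib, ← Finset.mul_sum,
        ← Finset.mul_sum, hμ1, ← hm]
    have h3 : ∑ γ, μ γ * (X γ)^2 ≤ c * m := by
      calc ∑ γ, μ γ * (X γ)^2 ≤ ∑ γ, μ γ * (c * X γ) :=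
          Finset.sum_le_sum fun γ _ => mul_le_mul_of_nonneg_left
            (by nlinarith [(hX γ).1, (hX γ).2]) (hμ0 γ)
      _ = c * m := by rw [hm, Finset.mul_sum]; exact Finset.sum_congr rfl fun γ _ => by ring
    have h4 : E ≤ 1 + (-(t*m) + t^2*c^2) := by
      nlinarith [sq_nonneg t, mul_le_mul_of_nonneg_left hmc (mul_nonneg (sq_nonneg t) hc.le)]
    linarith [Real.add_one_le_exp (-(t*m) + t^2*c^2)]
  have key : ∀ v ∈ Finset.univ.filter
      (fun v : Fin L → Γ => ∑ l, X (v l) < (L:ℝ) * (m - e)),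
      ∏ l, μ (v l) ≤ Real.exp (t * ((L:ℝ)*(m - e))) *
        ∏ l, (μ (v l) * Real.exp (-(t * X (v l)))) := by
    intro v hv
    rw [Finset.mem_filter] at hv
    have hprod : ∏ l, (μ (v l) * Real.exp (-(t * X (v l))))
        = (∏ l, μ (v l)) * Real.exp (-(t * ∑ l, X (v l))) := by
      rw [Finset.prod_mul_distrib, ← Real.exp_sum]
      congr 2
      rw [Finset.mul_sum, ← Finset.sum_neg_distrib]
    rw [hprod, ← mul_assoc, mul_comm (Real.exp _) (∏ l, μ (v l)), mul_assoc,
      ← Real.exp_add]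
    have hP : 0 ≤ ∏ l, μ (v l) := Finset.prod_nonneg fun l _ => hμ0 _
    have h1 : (1:ℝ) ≤ Real.exp (t * ((L:ℝ)*(m-e)) + -(t * ∑ l, X (v l))) :=
      Real.one_le_exp (by nlinarith [hv.2])
    nlinarith [h1, hP]
  calc ∑ v ∈ Finset.univ.filter
        (fun v : Fin L → Γ => ∑ l, X (v l) < (L:ℝ) * (m - e)), ∏ l, μ (v l)
      ≤ ∑ v ∈ Finset.univ.filter
        (fun v : Fin L → Γ => ∑ l, X (v l) < (L:ℝ) * (m - e)),
          Real.exp (t * ((L:ℝ)*(m - e))) *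
            ∏ l, (μ (v l) * Real.exp (-(t * X (v l)))) := Finset.sum_le_sum key
    _ ≤ ∑ v : Fin L → Γ, Real.exp (t * ((L:ℝ)*(m - e))) *
          ∏ l, (μ (v l) * Real.exp (-(t * X (v l)))) :=
        Finset.sum_le_sum_of_subset_of_nonneg (Finset.filter_subset _ _)
          (fun v _ _ => mul_nonneg (Real.exp_pos _).le
            (Finset.prod_nonneg fun l _ => mul_nonneg (hμ0 _) (Real.exp_pos _).le))
    _ = Real.exp (t * ((L:ℝ)*(m - e))) * E ^ L := by
        rw [← Finset.mul_sum]
        congr 1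
        exact (Fintype.sum_pow (fun γ => μ γ * Real.exp (-(t * X γ))) L).symm
    _ ≤ Real.exp (t * ((L:ℝ)*(m - e))) * (Real.exp (-(t*m) + t^2*c^2)) ^ L :=
        mul_le_mul_of_nonneg_left (pow_le_pow_left₀ hE0 hEle L) (Real.exp_pos _).le
    _ = Real.exp ((L:ℝ) * (-(t*e) + t^2*c^2)) := by
        rw [← Real.exp_nat_mul, ← Real.exp_add]
        congr 1; ring

lemma eventually_small (K B a : ℝ) (hB : 1 ≤ B) (ha : 0 < a) :
    ∃ N : ℕ, ∀ n ≥ N, K * B ^ n * Real.exp (-(a * (n:ℝ)^2)) < 1 := by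
  have hB0 : (0:ℝ) < B := lt_of_lt_of_le one_pos hB
  have key : Filter.Tendsto (fun n : ℕ => K * B ^ n * Real.exp (-(a * (n:ℝ)^2)))
      Filter.atTop (nhds 0) := by
    have heq : ∀ n : ℕ, K * B ^ n * Real.exp (-(a * (n:ℝ)^2))
        = K * Real.exp ((n:ℝ) * (Real.log B - a * n)) := by
      intro n
      conv_lhs => rw [← Real.exp_log hB0, ← Real.exp_nat_mul, mul_assoc, ← Real.exp_add]
      congr 2
      ring
    have h1 : Tendsto (fun n : ℕ => (n:ℝ)) atTop atTop := tendsto_natCast_atTop_atTop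
    have h2 : Tendsto (fun n : ℕ => Real.log B - a * (n:ℝ)) atTop atBot := by
      apply Filter.tendsto_atBot_add_const_left
      exact tendsto_neg_atTop_atBot.comp (h1.const_mul_atTop ha)
    have h3 : Tendsto (fun n : ℕ => (n:ℝ) * (Real.log B - a * n)) atTop atBot :=
      h1.atTop_mul_atBot₀ h2
    have h4 := (Real.tendsto_exp_atBot.comp h3).const_mul K
    rw [mul_zero] at h4
    exact (Filter.tendsto_congr heq).2 h4
  have h5 : ∀ᶠ n : ℕ in Filter.atTop,
      K * B ^ n * Real.exp (-(a * (n:ℝ)^2)) < 1 :=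
    key.eventually (Filter.eventually_iff_exists_mem.2
      ⟨Set.Iio 1, Iio_mem_nhds one_pos, fun x hx => hx⟩)
  exact Filter.eventually_atTop.1 h5

theorem derandomization_lemma
    {θ Γ : Type*} [Fintype θ] [Fintype Γ]
    (μ : Γ → ℝ) (hμ : IsProbDist μ) (c : ℝ) (hc : 0 < c)
    (I : (n : ℕ) → (θ → ℝ) → (Fin n → θ) → Γ → ℝ)
    (hrange : ∀ (n : ℕ) (q : θ → ℝ), IsProbDist q → ∀ (s : Fin n → θ) (γ : Γ),
      I n q s γ ∈ Set.Icc (0 : ℝ) c)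
    (f : ℝ → ℝ)
    (hf : Filter.Tendsto f (nhdsWithin 0 (Set.Ioi 0)) (nhds 0))
    (hLip : ∀ (γ : Γ) (n : ℕ) (s : Fin n → θ) (q q' : θ → ℝ), IsProbDist q → IsProbDist q' →
      ∀ δ > (0 : ℝ), (∑ t, |q t - q' t|) ≤ δ → |I n q s γ - I n q' s γ| ≤ f δ) :
    ∀ ε > (0 : ℝ), ∃ N : ℕ, ∀ n ≥ N, ∃ γs : Fin (n ^ 2) → Γ,
      ∀ (q : θ → ℝ), IsProbDist q → ∀ s : Fin n → θ,
        (1 - ε) * (∑ γ, μ γ * I n q s γ) - ε ≤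
          (1 / (n ^ 2) : ℝ) * ∑ l, I n q s (γs l) := by
  classical
  intro ε hε
  obtain ⟨hμ0, hμ1⟩ := hμ
  -- choose δ with f δ < ε/3
  have hfe : ∀ᶠ δ in nhdsWithin 0 (Set.Ioi 0), f δ < ε/3 :=
    hf.eventually (Filter.eventually_iff_exists_mem.2
      ⟨Set.Iio (ε/3), Iio_mem_nhds (by linarith), fun x hx => hx⟩)
  obtain ⟨δ, hfδ, hδpos⟩ :=
    (hfe.and (eventually_mem_nhdsWithin : ∀ᶠ δ : ℝ in nhdsWithin 0 (Set.Ioi 0), δ ∈ Set.Ioi 0)).exists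
  rw [Set.mem_Ioi] at hδpos
  -- the simplex is compact, get a finite δ-net T
  set S : Set (θ → ℝ) := {q | IsProbDist q} with hS
  have hScomp : IsCompact S := by
    rw [Metric.isCompact_iff_isClosed_bounded]
    constructor
    · have hSeq : S = (⋂ t : θ, {q : θ → ℝ | 0 ≤ q t}) ∩ {q : θ → ℝ | ∑ a, q a = 1} := by
        ext q
        simp [hS, IsProbDist, Set.mem_iInter, Set.mem_setOf_eq]
      rw [hSeq]
      exact (isClosed_iInter fun t =>
          isClosed_le continuous_const (continuous_apply t)).inter
        (isClosed_eq (continuous_finset_sum _ fun t _ => continuous_apply t) continuous_const)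
    · apply Bornology.IsBounded.subset (Metric.isBounded_closedBall (x := (0 : θ → ℝ)) (r := 1))
      intro q hq
      rw [Metric.mem_closedBall, dist_pi_le_iff zero_le_one]
      intro t
      have h1 : 0 ≤ q t := hq.1 t
      have h2 : q t ≤ 1 := by
        rw [← hq.2]
        exact Finset.single_le_sum (fun a _ => hq.1 a) (Finset.mem_univ t)
      simp only [Pi.zero_apply, Real.dist_eq, sub_zero]
      rw [abs_le]; constructor <;> linarith
  set δ' : ℝ := δ / (Fintype.card θ + 1) with hδ'
  have hδ'pos : 0 < δ' := div_pos hδpos (by positivity)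
  obtain ⟨T, hTS, hTfin, hTcov⟩ :=
    Metric.finite_approx_of_totallyBounded hScomp.totallyBounded δ' hδ'pos
  set Tf : Finset (θ → ℝ) := hTfin.toFinset with hTfdef
  have hTfP : ∀ q' ∈ Tf, IsProbDist q' := fun q' hq' => hTS (hTfin.mem_toFinset.1 hq')
  have hnet : ∀ q : θ → ℝ, IsProbDist q → ∃ q' ∈ Tf, (∑ t, |q t - q' t|) ≤ δ := by
    intro q hq
    have hqS : q ∈ S := hq
    obtain ⟨q', hq'T, hdist⟩ := Set.mem_iUnion₂.1 (hTcov hqS)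
    refine ⟨q', hTfin.mem_toFinset.2 hq'T, ?_⟩
    have hd : dist q q' ≤ δ' := le_of_lt (Metric.mem_ball.1 hdist)
    have hb : ∀ t, |q t - q' t| ≤ δ' := by
      intro t
      have h := dist_le_pi_dist q q' t
      rw [Real.dist_eq] at h
      linarith
    have hcpos : (0:ℝ) < (Fintype.card θ : ℝ) + 1 := by positivity
    calc ∑ t, |q t - q' t| ≤ ∑ _t : θ, δ' := Finset.sum_le_sum fun t _ => hb t
      _ = (Fintype.card θ : ℝ) * δ' := by
          rw [Finset.sum_const, Finset.card_univ, nsmul_eq_mul]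
      _ ≤ δ := by
          rw [hδ', mul_div_assoc', div_le_iff₀ hcpos]
          nlinarith [hδpos.le, Nat.cast_nonneg (α := ℝ) (Fintype.card θ)]
  -- constants
  set e : ℝ := ε/3 with he
  have hepos : 0 < e := by rw [he]; linarith
  set t₀ : ℝ := e / (2*c^2) with ht₀
  have ht₀pos : 0 < t₀ := div_pos hepos (by positivity)
  have haeq : t₀*e - t₀^2*c^2 = e^2/(4*c^2) := by
    rw [ht₀]; field_simp; ring
  have ha : 0 < t₀*e - t₀^2*c^2 := by rw [haeq]; positivity
  set B : ℝ := max (Fintype.card θ : ℝ) 1 with hB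
  have hB1 : (1:ℝ) ≤ B := le_max_right _ _
  obtain ⟨N₀, hN₀⟩ := eventually_small (Tf.card : ℝ) B (t₀*e - t₀^2*c^2) hB1 ha
  refine ⟨max N₀ 1, fun n hn => ?_⟩
  have hn1 : 1 ≤ n := le_trans (le_max_right _ _) hn
  have hnN₀ : N₀ ≤ n := le_trans (le_max_left _ _) hn
  set L := n^2 with hL
  have hLpos : (0:ℝ) < (L:ℝ) := by
    have : 0 < L := by rw [hL]; positivity
    exact_mod_cast this
  -- find a good tuple v
  have hgood : ∃ v : Fin L → Γ, ∀ q' ∈ Tf, ∀ s : Fin n → θ,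
      (L:ℝ) * ((∑ γ, μ γ * I n q' s γ) - e) ≤ ∑ l, I n q' s (v l) := by
    by_contra hcon
    push_neg at hcon
    have hsum1 : ∑ v : Fin L → Γ, ∏ l, μ (v l) = 1 := by
      have h := Fintype.sum_pow μ L
      rw [hμ1, one_pow] at h
      exact h.symm
    have hub : (1:ℝ) ≤ ∑ p ∈ Tf ×ˢ (Finset.univ : Finset (Fin n → θ)),
        ∑ v ∈ Finset.univ.filter (fun v : Fin L → Γ =>
          ∑ l, I n p.1 p.2 (v l) < (L:ℝ) * ((∑ γ, μ γ * I n p.1 p.2 γ) - e)),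
          ∏ l, μ (v l) := by
      rw [← hsum1]
      rw [Finset.sum_congr rfl (fun (p : (θ → ℝ) × (Fin n → θ))
        (_ : p ∈ Tf ×ˢ (Finset.univ : Finset (Fin n → θ))) => Finset.sum_filter
          (fun v : Fin L → Γ =>
            ∑ l, I n p.1 p.2 (v l) < (L:ℝ) * ((∑ γ, μ γ * I n p.1 p.2 γ) - e))
          (fun v => ∏ l, μ (v l)))]
      rw [Finset.sum_comm]
      apply Finset.sum_le_sum
      intro v _
      obtain ⟨q', hq'T, s, hbad⟩ := hcon v
      have hone := Finset.single_le_sum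
        (f := fun p : (θ → ℝ) × (Fin n → θ) =>
          if ∑ l, I n p.1 p.2 (v l) < (L:ℝ) * ((∑ γ, μ γ * I n p.1 p.2 γ) - e)
          then ∏ l, μ (v l) else 0)
        (fun p _ => by
          split_ifs
          · exact Finset.prod_nonneg fun l _ => hμ0 _
          · exact le_refl 0)
        (show (q', s) ∈ Tf ×ˢ (Finset.univ : Finset (Fin n → θ)) from
          Finset.mem_product.2 ⟨hq'T, Finset.mem_univ s⟩)
      dsimp only at hone
      rw [if_pos hbad] at hone
      exact hone
    have hub2 : ∑ p ∈ Tf ×ˢ (Finset.univ : Finset (Fin n → θ)),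
        ∑ v ∈ Finset.univ.filter (fun v : Fin L → Γ =>
          ∑ l, I n p.1 p.2 (v l) < (L:ℝ) * ((∑ γ, μ γ * I n p.1 p.2 γ) - e)),
          ∏ l, μ (v l)
        ≤ (Tf.card : ℝ) * ((Fintype.card θ : ℝ))^n *
            Real.exp ((L:ℝ) * (-(t₀*e) + t₀^2*c^2)) := by
      calc ∑ p ∈ Tf ×ˢ (Finset.univ : Finset (Fin n → θ)),
          ∑ v ∈ Finset.univ.filter (fun v : Fin L → Γ =>
            ∑ l, I n p.1 p.2 (v l) < (L:ℝ) * ((∑ γ, μ γ * I n p.1 p.2 γ) - e)),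
            ∏ l, μ (v l)
          ≤ ∑ _p ∈ Tf ×ˢ (Finset.univ : Finset (Fin n → θ)),
              Real.exp ((L:ℝ) * (-(t₀*e) + t₀^2*c^2)) := by
            apply Finset.sum_le_sum
            intro p hp
            have hpP : IsProbDist p.1 := hTfP p.1 (Finset.mem_product.1 hp).1
            exact chernoff_bound μ hμ0 hμ1 c hc (I n p.1 p.2)
              (fun γ => hrange n p.1 hpP p.2 γ) t₀ e ht₀pos L
        _ = (Tf.card : ℝ) * ((Fintype.card θ : ℝ))^n *
              Real.exp ((L:ℝ) * (-(t₀*e) + t₀^2*c^2)) := by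
            rw [Finset.sum_const, nsmul_eq_mul, Finset.card_product, Finset.card_univ]
            have : Fintype.card (Fin n → θ) = Fintype.card θ ^ n := by
              simp [Fintype.card_fun]
            rw [this]
            push_cast
            ring
    have hlt : (Tf.card : ℝ) * ((Fintype.card θ : ℝ))^n *
        Real.exp ((L:ℝ) * (-(t₀*e) + t₀^2*c^2)) < 1 := by
      have hexp : Real.exp ((L:ℝ) * (-(t₀*e) + t₀^2*c^2))
          = Real.exp (-((t₀*e - t₀^2*c^2) * (n:ℝ)^2)) := by
        congr 1
        rw [hL]
        push_cast
        ring
      rw [hexp]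
      calc (Tf.card : ℝ) * ((Fintype.card θ : ℝ))^n *
            Real.exp (-((t₀*e - t₀^2*c^2) * (n:ℝ)^2))
          ≤ (Tf.card : ℝ) * B^n * Real.exp (-((t₀*e - t₀^2*c^2) * (n:ℝ)^2)) := by
            apply mul_le_mul_of_nonneg_right _ (Real.exp_pos _).le
            exact mul_le_mul_of_nonneg_left
              (pow_le_pow_left₀ (Nat.cast_nonneg _) (le_max_left _ _) n)
              (Nat.cast_nonneg _)
        _ < 1 := hN₀ n hnN₀
    linarith
  obtain ⟨v, hv⟩ := hgood
  refine ⟨v, ?_⟩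
  intro q hq s
  obtain ⟨q', hq'T, hqq'⟩ := hnet q hq
  have hq'P : IsProbDist q' := hTfP q' hq'T
  have hdiff : ∀ γ, |I n q s γ - I n q' s γ| ≤ f δ := fun γ =>
    hLip γ n s q q' hq hq'P δ hδpos hqq'
  set mq := ∑ γ, μ γ * I n q s γ with hmq
  set mq' := ∑ γ, μ γ * I n q' s γ with hmq'
  have hmdiff : |mq - mq'| ≤ f δ := by
    have heq2 : mq - mq' = ∑ γ, μ γ * (I n q s γ - I n q' s γ) := by
      rw [hmq, hmq', ← Finset.sum_sub_distrib]
      exact Finset.sum_congr rfl fun γ _ => by ring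
    rw [heq2]
    calc |∑ γ, μ γ * (I n q s γ - I n q' s γ)|
        ≤ ∑ γ, |μ γ * (I n q s γ - I n q' s γ)| := Finset.abs_sum_le_sum_abs _ _
      _ ≤ ∑ γ, μ γ * f δ := Finset.sum_le_sum fun γ _ => by
          rw [abs_mul, abs_of_nonneg (hμ0 γ)]
          exact mul_le_mul_of_nonneg_left (hdiff γ) (hμ0 γ)
      _ = f δ := by rw [← Finset.sum_mul, hμ1, one_mul]
  have hsdiff : ∑ l, I n q' s (v l) - (L:ℝ) * f δ ≤ ∑ l, I n q s (v l) := by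
    have hterm : ∀ l : Fin L, I n q' s (v l) - f δ ≤ I n q s (v l) := by
      intro l
      have h := abs_le.1 (hdiff (v l))
      linarith [h.1, h.2]
    calc ∑ l, I n q' s (v l) - (L:ℝ) * f δ = ∑ l, (I n q' s (v l) - f δ) := by
          rw [Finset.sum_sub_distrib, Finset.sum_const, Finset.card_univ,
            Fintype.card_fin, nsmul_eq_mul]
      _ ≤ ∑ l, I n q s (v l) := Finset.sum_le_sum fun l _ => hterm l
  have hmq0 : 0 ≤ mq :=
    Finset.sum_nonneg fun γ _ => mul_nonneg (hμ0 γ) (hrange n q hq s γ).1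
  have h1 := hv q' hq'T s
  have h2 := abs_le.1 hmdiff
  have h3 : mq - ε ≤ mq' - e - f δ := by
    have hf3 : f δ < ε/3 := hfδ
    rw [he]
    linarith [h2.1, h2.2]
  have h4 : (L:ℝ) * (mq - ε) ≤ (L:ℝ) * (mq' - e - f δ) :=
    mul_le_mul_of_nonneg_left h3 hLpos.le
  have h5 : (L:ℝ) * (mq' - e - f δ) = (L:ℝ) * (mq' - e) - (L:ℝ) * f δ := by ring
  have hkey : (L:ℝ) * (mq - ε) ≤ ∑ l, I n q s (v l) := by linarith
  have hfin : (1-ε)*mq - ε ≤ (1/(L:ℝ)) * ∑ l, I n q s (v l) := by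
    have h6 := mul_le_mul_of_nonneg_left hkey (le_of_lt (one_div_pos.2 hLpos))
    rw [← mul_assoc, one_div_mul_cancel (ne_of_gt hLpos), one_mul] at h6
    nlinarith [hmq0, hε]
  have hcast : ((L:ℕ):ℝ) = ((n:ℝ))^2 := by rw [hL]; push_cast; ring
  rw [hcast] at hfin
  exact hfin

end
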